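/- Fix N ≥ 1, complex numbers p₁, …, p_N, pairwise distinct complex numbers τ₁, …, τ_N, and η ∈ ℂ with η ≠ 0. Let M(u) be the N×N matrix with (a,c) entry τ_a^{c−1}·(η^{N+1−2c}u − p_a) and M⁰ the N×N matrix with (a,c) entry τ_a^{c−1}. Let L be the trigonometric Ruijsenaars–Schneider Lax matrix, i.e. the N×N complex matrix with entries L_{ij} = (∏_{k≠j} (ητ_i − η⁻¹τ_k) / ∏_{k≠i} (τ_i − τ_k))·p_j. Then for all u ∈ ℂ: det M(u)/det M⁰ = det(u·1_N − L). -/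

import Mathlib

open Finset Polynomial Matrix

set_option maxHeartbeats 1000000

/-- The N×N matrix `M(u)` with (a,c) entry `τ_a^{c-1} (η^{N+1-2c} u − p_a)`
(here `c` is 0-indexed). -/
noncomputable def rsM (N : ℕ) (p τ : Fin N → ℂ) (η u : ℂ) :
    Matrix (Fin N) (Fin N) ℂ :=
  Matrix.of fun a c => τ a ^ (c : ℕ) * (η ^ ((N : ℤ) - 1 - 2 * (c : ℕ)) * u - p a)

/-- The Vandermonde matrix `M⁰` with (a,c) entry `τ_a^{c-1}`. -/
noncomputable def rsM0 (N : ℕ) (τ : Fin N → ℂ) : Matrix (Fin N) (Fin N) ℂ :=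
  Matrix.of fun a c => τ a ^ (c : ℕ)

/-- The trigonometric Ruijsenaars–Schneider Lax matrix
`L_{ij} = (∏_{k≠j} (ητ_i − η⁻¹τ_k) / ∏_{k≠i} (τ_i − τ_k)) p_j`. -/
noncomputable def trsLax (N : ℕ) (p τ : Fin N → ℂ) (η : ℂ) :
    Matrix (Fin N) (Fin N) ℂ :=
  Matrix.of fun i j =>
    (∏ k ∈ Finset.univ.erase j, (η * τ i - η⁻¹ * τ k)) /
        (∏ k ∈ Finset.univ.erase i, (τ i - τ k)) * p j

/-- Lagrange interpolation of `X^c` at nodes `τ`, evaluated at `x`. -/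
lemma lagr_pow (N : ℕ) (τ : Fin N → ℂ) (hτ : Function.Injective τ) (c : Fin N) (x : ℂ) :
    ∑ j, τ j ^ (c : ℕ) * ∏ k ∈ Finset.univ.erase j, ((x - τ k) * (τ j - τ k)⁻¹)
      = x ^ (c : ℕ) := by
  have hvs : Set.InjOn τ (Finset.univ : Finset (Fin N)) := hτ.injOn
  have hdeg : (Polynomial.X ^ (c : ℕ) : ℂ[X]).degree < #(Finset.univ : Finset (Fin N)) := by
    rw [Polynomial.degree_X_pow, Finset.card_univ, Fintype.card_fin]
    exact_mod_cast c.2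
  have h := Lagrange.eq_interpolate hvs hdeg
  have := congrArg (Polynomial.eval x) h
  rw [show x ^ (c : ℕ) = Polynomial.eval x (Polynomial.X ^ (c : ℕ) : ℂ[X]) by simp, this,
    Lagrange.interpolate_apply, eval_finset_sum]
  refine Finset.sum_congr rfl fun j _ => ?_
  rw [eval_mul, eval_C, eval_pow, eval_X, Lagrange.basis, eval_prod]
  congr 1
  refine Finset.prod_congr rfl fun k hk => ?_
  rw [Lagrange.basisDivisor, eval_mul, eval_C, eval_sub, eval_X, eval_C]
  ring

lemma prod_zpow_eq_zpow_sum {α : Type*} (s : Finset α) (f : α → ℤ) (a : ℂ) (ha : a ≠ 0) :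
    ∏ i ∈ s, a ^ f i = a ^ (∑ i ∈ s, f i) := by
  induction s using Finset.cons_induction with
  | empty => simp
  | cons i s hi ih => rw [Finset.prod_cons, Finset.sum_cons, ih, zpow_add₀ ha]

/-- The Vandermonde-like determinant ratio solving the `T[U(N)]` QQ̃ system equals
the spectral determinant of the trigonometric Ruijsenaars–Schneider Lax matrix. -/
theorem detratio_eq_tRS_spectral_det (N : ℕ) (hN : 1 ≤ N) (p τ : Fin N → ℂ)
    (hτ : Function.Injective τ) (η : ℂ) (hη : η ≠ 0) (u : ℂ) :
    (rsM N p τ η u).det / (rsM0 N τ).det =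
      (u • (1 : Matrix (Fin N) (Fin N) ℂ) - trsLax N p τ η).det := by
  classical
  set V : Matrix (Fin N) (Fin N) ℂ := rsM0 N τ with hVdef
  -- V is the Vandermonde matrix, with nonzero determinant
  have hVvan : V = Matrix.vandermonde τ := rfl
  have hVdet0 : V.det ≠ 0 := by
    rw [hVvan]; exact Matrix.det_vandermonde_ne_zero_iff.mpr hτ
  have hVdet : IsUnit V.det := isUnit_iff_ne_zero.mpr hVdet0
  have hVV : V * V⁻¹ = 1 := Matrix.mul_nonsing_inv V hVdet
  have hVV' : V⁻¹ * V = 1 := Matrix.nonsing_inv_mul V hVdet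
  -- the diagonal matrices
  set Dm : Matrix (Fin N) (Fin N) ℂ :=
    Matrix.diagonal (fun c : Fin N => η ^ ((N : ℤ) - 1 - 2 * (c : ℕ))) with hDdef
  set Dinv : Matrix (Fin N) (Fin N) ℂ :=
    Matrix.diagonal (fun c : Fin N => η ^ (2 * ((c : ℕ) : ℤ) + 1 - N)) with hDinvdef
  set Pm : Matrix (Fin N) (Fin N) ℂ := Matrix.diagonal p with hPdef
  set d : Fin N → ℂ := fun i => ∏ k ∈ Finset.univ.erase i, (τ i - τ k) with hddef
  have hd : ∀ i, d i ≠ 0 := by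
    intro i
    refine Finset.prod_ne_zero_iff.mpr fun k hk => sub_ne_zero.mpr fun h => ?_
    exact (Finset.mem_erase.mp hk).1 (hτ h).symm
  set Δ : Matrix (Fin N) (Fin N) ℂ := Matrix.diagonal d with hΔdef
  set Δi : Matrix (Fin N) (Fin N) ℂ := Matrix.diagonal (fun i => (d i)⁻¹) with hΔidef
  set C : Matrix (Fin N) (Fin N) ℂ :=
    Matrix.of (fun i j => (∏ k ∈ Finset.univ.erase j, (η * τ i - η⁻¹ * τ k)) / d j)
    with hCdef
  -- basic diagonal facts
  have hDDinv : Dm * Dinv = 1 := by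
    rw [hDdef, hDinvdef, Matrix.diagonal_mul_diagonal]
    convert Matrix.diagonal_one with c
    rw [← zpow_add₀ hη,
      show ((N : ℤ) - 1 - 2 * ((c : ℕ) : ℤ) + (2 * ((c : ℕ) : ℤ) + 1 - (N : ℤ))) = 0 by ring,
      zpow_zero]
  have hΔΔ : Δi * Δ = 1 := by
    rw [hΔdef, hΔidef, Matrix.diagonal_mul_diagonal]
    convert Matrix.diagonal_one with i
    exact inv_mul_cancel₀ (hd i)
  have hΔΔ' : Δ * Δi = 1 := by
    rw [hΔdef, hΔidef, Matrix.diagonal_mul_diagonal]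
    convert Matrix.diagonal_one with i
    exact mul_inv_cancel₀ (hd i)
  -- determinant of Dm is 1
  have hdetD : Dm.det = 1 := by
    rw [hDdef, Matrix.det_diagonal,
      prod_zpow_eq_zpow_sum _ _ _ hη]
    have hsum : (∑ c : Fin N, ((N : ℤ) - 1 - 2 * ((c : ℕ) : ℤ))) = 0 := by
      have h3 : (∑ c : Fin N, ((c : ℕ) : ℤ)) = ((∑ c ∈ Finset.range N, c : ℕ) : ℤ) := by
        rw [Nat.cast_sum, Fin.sum_univ_eq_sum_range]
      have hG : ((∑ c ∈ Finset.range N, c : ℕ) : ℤ) * 2 = (N : ℤ) * ((N : ℤ) - 1) := by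
        have := Finset.sum_range_id_mul_two N
        have := congrArg (Nat.cast : ℕ → ℤ) this
        push_cast [Nat.cast_sub hN] at this
        convert this using 2 <;> push_cast <;> ring
      have e1 : (∑ c : Fin N, ((N : ℤ) - 1 - 2 * ((c : ℕ) : ℤ)))
          = (N : ℤ) * ((N : ℤ) - 1) - 2 * ((∑ c ∈ Finset.range N, c : ℕ) : ℤ) := by
        rw [Finset.sum_sub_distrib, Finset.sum_const, Finset.card_univ, Fintype.card_fin,
          ← Finset.mul_sum, h3, nsmul_eq_mul]
      rw [e1]
      linarith [hG]
    rw [hsum, zpow_zero]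
  -- the key Lagrange identity: C * V = V * Dinv
  have hkey : C * V = V * Dinv := by
    ext i c
    rw [Matrix.mul_apply, hDinvdef, Matrix.mul_diagonal]
    have hterm : ∀ j : Fin N,
        C i j * V j c
          = η⁻¹ ^ (N - 1) *
            (τ j ^ (c : ℕ) * ∏ k ∈ Finset.univ.erase j,
              ((η ^ 2 * τ i - τ k) * (τ j - τ k)⁻¹)) := by
      intro j
      have h1 : C i j = ∏ k ∈ Finset.univ.erase j,
          ((η * τ i - η⁻¹ * τ k) * (τ j - τ k)⁻¹) := by
        rw [hCdef]
        simp only [Matrix.of_apply]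
        rw [div_eq_mul_inv, hddef, ← Finset.prod_inv_distrib, ← Finset.prod_mul_distrib]
      have h2 : ∀ k : Fin N, (η * τ i - η⁻¹ * τ k) * (τ j - τ k)⁻¹
          = η⁻¹ * ((η ^ 2 * τ i - τ k) * (τ j - τ k)⁻¹) := by
        intro k
        field_simp
      rw [h1]
      simp_rw [h2]
      rw [Finset.prod_mul_distrib, Finset.prod_const, Finset.card_erase_of_mem
        (Finset.mem_univ j), Finset.card_univ, Fintype.card_fin]
      show _ * _ = _
      simp only [hVdef, rsM0, Matrix.of_apply]
      ring
    simp_rw [hterm]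
    rw [← Finset.mul_sum, lagr_pow N τ hτ c (η ^ 2 * τ i)]
    -- now pure zpow arithmetic
    have hNc : ((N - 1 : ℕ) : ℤ) = (N : ℤ) - 1 := by
      rw [Nat.cast_sub hN]; norm_num
    rw [show V i c = τ i ^ (c : ℕ) from rfl, mul_pow, ← pow_mul, inv_pow,
      ← zpow_natCast η (N - 1), ← _root_.zpow_neg, ← zpow_natCast η (2 * (c : ℕ))]
    rw [← mul_assoc, mul_comm (η ^ (-((N - 1 : ℕ) : ℤ))) (η ^ ((2 * (c : ℕ) : ℕ) : ℤ)),
      ← zpow_add₀ hη]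
    rw [mul_comm (τ i ^ (c : ℕ))]
    congr 2
    push_cast [hNc]
    ring
  have hC : C = V * Dinv * V⁻¹ := by
    rw [← hkey, Matrix.mul_assoc, hVV, Matrix.mul_one]
  -- decomposition of M(u)
  have hM : rsM N p τ η u = u • (V * Dm) - Pm * V := by
    ext a c
    simp only [rsM, Matrix.of_apply, Matrix.sub_apply, Matrix.smul_apply,
      Matrix.mul_diagonal, Matrix.diagonal_mul, hVdef, hDdef, hPdef, rsM0, smul_eq_mul]
    ring
  -- decomposition of the Lax matrix
  have hL : trsLax N p τ η = Δi * (C * Pm) * Δ := by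
    ext i j
    rw [hΔdef, hΔidef, hPdef, hCdef, Matrix.mul_diagonal, Matrix.diagonal_mul,
      Matrix.mul_diagonal]
    simp only [trsLax, Matrix.of_apply]
    rw [hddef]
    field_simp [hd i, hd j]
    rw [mul_div_mul_right _ _ (show (∏ k ∈ univ.erase j, (τ j - τ k)) ≠ 0 from hd j)]
  -- main chain of determinant identities
  have hfac : rsM N p τ η u
      = (V * Dm) * (u • (1 : Matrix (Fin N) (Fin N) ℂ) - Dinv * V⁻¹ * Pm * V) := by
    rw [hM, Matrix.mul_sub, Matrix.mul_smul, Matrix.mul_one]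
    congr 1
    symm
    calc V * Dm * (Dinv * V⁻¹ * Pm * V)
        = V * (Dm * Dinv) * (V⁻¹ * (Pm * V)) := by
          simp only [Matrix.mul_assoc]
      _ = Pm * V := by
          rw [hDDinv, Matrix.mul_one, ← Matrix.mul_assoc, ← Matrix.mul_assoc, hVV,
            Matrix.one_mul]
  have hsim : u • (1 : Matrix (Fin N) (Fin N) ℂ) - Dinv * V⁻¹ * Pm * V
      = V⁻¹ * (u • (1 : Matrix (Fin N) (Fin N) ℂ) - C * Pm) * V := by
    rw [Matrix.mul_sub, Matrix.sub_mul, Matrix.mul_smul, Matrix.mul_one, Matrix.smul_mul,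
      hVV']
    congr 1
    rw [hC]
    symm
    calc V⁻¹ * (V * Dinv * V⁻¹ * Pm) * V
        = (V⁻¹ * V) * Dinv * (V⁻¹ * Pm * V) := by simp only [Matrix.mul_assoc]
      _ = Dinv * V⁻¹ * Pm * V := by simp only [hVV', Matrix.one_mul, Matrix.mul_assoc]
  have hsimL : u • (1 : Matrix (Fin N) (Fin N) ℂ) - trsLax N p τ η
      = Δi * (u • (1 : Matrix (Fin N) (Fin N) ℂ) - C * Pm) * Δ := by
    rw [hL, Matrix.mul_sub, Matrix.sub_mul, Matrix.mul_smul, Matrix.mul_one, Matrix.smul_mul,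
      hΔΔ]
  -- determinants
  have hdetVi : V⁻¹.det * V.det = 1 := by
    rw [← Matrix.det_mul, hVV', Matrix.det_one]
  have hdetΔ : Δi.det * Δ.det = 1 := by
    rw [← Matrix.det_mul, hΔΔ, Matrix.det_one]
  have hdetM : (rsM N p τ η u).det
      = V.det * (u • (1 : Matrix (Fin N) (Fin N) ℂ) - C * Pm).det := by
    rw [hfac, hsim, Matrix.det_mul, Matrix.det_mul, Matrix.det_mul, Matrix.det_mul, hdetD]
    linear_combination (V.det * (u • (1 : Matrix (Fin N) (Fin N) ℂ) - C * Pm).det) * hdetVi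
  have hdetL : (u • (1 : Matrix (Fin N) (Fin N) ℂ) - trsLax N p τ η).det
      = (u • (1 : Matrix (Fin N) (Fin N) ℂ) - C * Pm).det := by
    rw [hsimL, Matrix.det_mul, Matrix.det_mul]
    linear_combination (u • (1 : Matrix (Fin N) (Fin N) ℂ) - C * Pm).det * hdetΔ
  rw [hdetM, hdetL, mul_comm, mul_div_assoc, div_self hVdet0, mul_one]
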